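/- Let B be a generalized Bayesian network over nodes V, let C ⊆ V be a cutset for B, and let μ ∈ [B]_{MC-C}. Then μ is strongly CPT-consistent for every node in V∖C and weakly CPT-consistent for every node in C. -/

import Mathlib

open Filter
open scoped Classical

noncomputable section

namespace GBNPaper

variable {V : Type} [Fintype V] [DecidableEq V]

/-- A distribution over a finite type: nonnegative values summing to one. -/
def IsDist {α : Type} [Fintype α] (μ : α → ℝ) : Prop :=
  (∀ a, 0 ≤ μ a) ∧ ∑ a, μ a = 1

/-- The set of parents of a node `X` w.r.t. an edge set `E`. -/
def Pre (E : Finset (V × V)) (X : V) : Finset V :=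
  (E.filter fun e => e.2 = X).image Prod.fst

/-- The set of initial (parentless) nodes. -/
def InitSet (E : Finset (V × V)) : Finset V :=
  Finset.univ.filter fun X => Pre E X = ∅

/-- Assignments over a subset `U` of the nodes. -/
abbrev Asg (U : Finset V) : Type := {x // x ∈ U} → Bool

/-- A full assignment `b` agrees with a partial assignment `d` on `U`. -/
abbrev Agrees (b : V → Bool) (U : Finset V) (d : Asg U) : Prop :=
  ∀ x : {x // x ∈ U}, b x.1 = d x

/-- A generalized Bayesian network over node set `V`. -/
structure GBN (V : Type) [Fintype V] [DecidableEq V] where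
  /-- the directed edges -/
  edges : Finset (V × V)
  /-- CPT entries: the probability of `X = T` given an assignment of the parents of `X` -/
  cpt : (X : V) → Asg (Pre edges X) → ℝ
  cpt_nonneg : ∀ X b, 0 ≤ cpt X b
  cpt_le_one : ∀ X b, cpt X b ≤ 1
  /-- the initial distribution over assignments of the initial nodes -/
  ι : Asg (InitSet edges) → ℝ
  ι_dist : IsDist ι

/-- Probability of an event (set of full assignments) under `μ`. -/
def probIf (μ : (V → Bool) → ℝ) (p : (V → Bool) → Prop) : ℝ :=
  ∑ b : V → Bool, if p b then μ b else 0

/-- The marginal distribution of `μ` on `U`. -/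
def marginal (μ : (V → Bool) → ℝ) (U : Finset V) : Asg U → ℝ :=
  fun d => probIf μ fun b => Agrees b U d

/-- `Pr(X = v | parents as given by b)`. -/
def copyProb (B : GBN V) (X : V) (v : Bool) (b : V → Bool) : ℝ :=
  if v then B.cpt X (fun p => b p.1) else 1 - B.cpt X (fun p => b p.1)

/-- The standard BN semantics (chain rule) of a GBN. -/
def distBN (B : GBN V) (b : V → Bool) : ℝ :=
  B.ι (fun x => b x.1) *
    ∏ X ∈ Finset.univ \ InitSet B.edges, copyProb B X (b X) b

/-- The edge set contains no directed cycle. -/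
def Acyclic (E : Finset (V × V)) : Prop :=
  ∀ x : V, ¬ Relation.TransGen (fun a b => (a, b) ∈ E) x x

/-- `C` is a cutset: every directed cycle contains a node of `C`. -/
def IsCutset (E : Finset (V × V)) (C : Finset V) : Prop :=
  ∀ x : V, ¬ Relation.TransGen (fun a b => (a, b) ∈ E ∧ a ∉ C ∧ b ∉ C) x x

/-- The standard BN semantics of the `C`-dissected GBN `B↑C↑γ`, as a joint
distribution over assignments of the original nodes `V` together with
assignments of the copies `C'` of the cutset nodes. -/
def distDissect (B : GBN V) (C : Finset V) (γ : Asg C → ℝ)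
    (b : V → Bool) (c : Asg C) : ℝ :=
  B.ι (fun x => b x.1) * γ (fun x => b x.1) *
    (∏ X ∈ (Finset.univ \ InitSet B.edges) \ C, copyProb B X (b X) b) *
    ∏ Y ∈ C.attach, copyProb B Y.1 (c Y) b

/-- `Next(B,C,γ)`: restrict `dist_BN(B↑C↑γ)` to `(V∖C) ∪ C'` and re-identify
the copies with the original cutset nodes. -/
def Next (B : GBN V) (C : Finset V) (γ : Asg C → ℝ) (a : V → Bool) : ℝ :=
  ∑ b : V → Bool,
    if ∀ x : V, x ∉ C → b x = a x then distDissect B C γ b (fun y => a y.1) else 0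

/-- `Extend(B,C,γ) = dist_BN(B↑C↑γ)|_V`. -/
def Extend (B : GBN V) (C : Finset V) (γ : Asg C → ℝ) (a : V → Bool) : ℝ :=
  ∑ c : Asg C, distDissect B C γ a c

/-- Dirac (point) distribution. -/
def DiracD {α : Type} [DecidableEq α] (b : α) : α → ℝ := fun c => if c = b then 1 else 0

/-- Transition matrix of the cutset Markov chain `M_{B↑C}`:
`P(b,c) = Next(B,C,Dirac(b))|_C (c)`. -/
def cutsetP (B : GBN V) (C : Finset V) (b c : Asg C) : ℝ :=
  marginal (Next B C (DiracD b)) C c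

/-- Vector-matrix multiplication `γ·P`. -/
def vecMul {α : Type} [Fintype α] (γ : α → ℝ) (P : α → α → ℝ) : α → ℝ :=
  fun c => ∑ b, γ b * P b c

/-- The transient distributions `γ0·P^n`. -/
def matIter {α : Type} [Fintype α] (P : α → α → ℝ) (γ0 : α → ℝ) : ℕ → (α → ℝ)
  | 0 => γ0
  | n + 1 => vecMul (matIter P γ0 n) P

/-- The sequence `γ_{n+1} = Next(B,C,γ_n)|_C`. -/
def nextSeq (B : GBN V) (C : Finset V) (γ0 : Asg C → ℝ) : ℕ → (Asg C → ℝ)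
  | 0 => γ0
  | n + 1 => marginal (Next B C (nextSeq B C γ0 n)) C

/-- Cesàro averages of a sequence of vectors. -/
def cesaro {α : Type} (f : ℕ → α → ℝ) (n : ℕ) : α → ℝ :=
  fun a => (∑ i ∈ Finset.range (n + 1), f i a) / (n + 1)

/-- The Markov chain semantics `[B]_{MC-C}`: image of
`γ0 ↦ Extend(B,C,lrf^{γ0})` over all initial cutset distributions `γ0`,
where `lrf^{γ0}` is the Cesàro limit of the transient distributions. -/
def MCSem (B : GBN V) (C : Finset V) : Set ((V → Bool) → ℝ) :=
  { μ | ∃ γ0 γ, IsDist γ0 ∧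
      Tendsto (cesaro (matIter (cutsetP B C) γ0)) atTop (nhds γ) ∧
      μ = Extend B C γ }

/-- The limit semantics `[B]_{Lim-C}`. -/
def LimSem (B : GBN V) (C : Finset V) : Set ((V → Bool) → ℝ) :=
  { μ | ∃ γ0 γ, IsDist γ0 ∧
      Tendsto (nextSeq B C γ0) atTop (nhds γ) ∧
      μ = Extend B C γ }

/-- The limit average semantics `[B]_{LimAvg-C}`. -/
def LimAvgSem (B : GBN V) (C : Finset V) : Set ((V → Bool) → ℝ) :=
  { μ | ∃ γ0 γ, IsDist γ0 ∧
      Tendsto (cesaro (nextSeq B C γ0)) atTop (nhds γ) ∧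
      μ = Extend B C γ }

/-- The Markov chain semantics in stationary-distribution form:
`{ Extend(B,C,γ) : γ a distribution with γ = γ·P }`. -/
def MCStatSem (B : GBN V) (C : Finset V) : Set ((V → Bool) → ℝ) :=
  { μ | ∃ γ : Asg C → ℝ, IsDist γ ∧ γ = vecMul γ (cutsetP B C) ∧ μ = Extend B C γ }

/-- Strong CPT-consistency of `μ` for node `X`. -/
def StrongCPT (B : GBN V) (μ : (V → Bool) → ℝ) (X : V) : Prop :=
  ∀ c : Asg (Pre B.edges X),
    probIf μ (fun f => f X = true ∧ Agrees f (Pre B.edges X) c) =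
      probIf μ (fun f => Agrees f (Pre B.edges X) c) * B.cpt X c

/-- Weak CPT-consistency of `μ` for node `X`. -/
def WeakCPT (B : GBN V) (μ : (V → Bool) → ℝ) (X : V) : Prop :=
  probIf μ (fun f => f X = true) =
    ∑ c : Asg (Pre B.edges X),
      probIf μ (fun f => Agrees f (Pre B.edges X) c) * B.cpt X c

/-- The CPT semantics `[B]_{Cpt}`. -/
def CptSem (B : GBN V) : Set ((V → Bool) → ℝ) :=
  { μ | IsDist μ ∧ marginal μ (InitSet B.edges) = B.ι ∧
      ∀ X, X ∉ InitSet B.edges → StrongCPT B μ X }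

/-- `(X ⊥ Y | Z) ∈ Indep(μ)`. -/
def IndepTriple (μ : (V → Bool) → ℝ) (X Y Z : Finset V) : Prop :=
  ∀ (a : Asg X) (b : Asg Y) (c : Asg Z),
    probIf μ (fun f => Agrees f Y b ∧ Agrees f Z c) = 0 ∨
    probIf μ (fun f => Agrees f X a ∧ Agrees f Y b ∧ Agrees f Z c) /
        probIf μ (fun f => Agrees f Y b ∧ Agrees f Z c) =
      probIf μ (fun f => Agrees f X a ∧ Agrees f Z c) /
        probIf μ (fun f => Agrees f Z c)

def PairwiseDisjoint3 (X Y Z : Finset V) : Prop :=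
  Disjoint X Y ∧ Disjoint X Z ∧ Disjoint Y Z

/-- `Indep(μ)` as a set of triples. -/
def IndepSet (μ : (V → Bool) → ℝ) : Set (Finset V × Finset V × Finset V) :=
  { t | PairwiseDisjoint3 t.1 t.2.1 t.2.2 ∧ IndepTriple μ t.1 t.2.1 t.2.2 }

/-- The CPT-I semantics `[B]_{Cpt-I}`. -/
def CptISem (B : GBN V) (I : Set (Finset V × Finset V × Finset V)) :
    Set ((V → Bool) → ℝ) :=
  { μ | μ ∈ CptSem B ∧ I ⊆ IndepSet μ }

/-! d-separation -/

def Adjacent (E : Finset (V × V)) (x y : V) : Prop := (x, y) ∈ E ∨ (y, x) ∈ E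

/-- Reachability along directed edges (including the node itself). -/
def Reaches (E : Finset (V × V)) (x y : V) : Prop :=
  Relation.ReflTransGen (fun a b => (a, b) ∈ E) x y

/-- An intermediate triple `a, w, b` on a path blocks it given `Z`:
either `w ∈ Z` and `w` lies in a chain or a fork, or `w` lies in a collider
and no node reachable from `w` (including `w`) is in `Z`. -/
def BlockedTriple (E : Finset (V × V)) (Z : Finset V) (a w b : V) : Prop :=
  (w ∈ Z ∧ (((a, w) ∈ E ∧ (w, b) ∈ E) ∨ ((b, w) ∈ E ∧ (w, a) ∈ E) ∨
      ((w, a) ∈ E ∧ (w, b) ∈ E))) ∨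
  ((a, w) ∈ E ∧ (b, w) ∈ E ∧ ∀ d, Reaches E w d → d ∉ Z)

/-- A path (as a list of nodes) is blocked given `Z`. -/
def Blocked (E : Finset (V × V)) (Z : Finset V) (W : List V) : Prop :=
  ∃ l₁ a w b l₂, W = l₁ ++ a :: w :: b :: l₂ ∧ BlockedTriple E Z a w b

/-- `x` and `y` are d-separated given `Z`: every undirected simple path
from `x` to `y` is blocked given `Z`. -/
def DSepNodes (E : Finset (V × V)) (x y : V) (Z : Finset V) : Prop :=
  ∀ W : List V, W.Chain' (Adjacent E) → W.Nodup →
    W.head? = some x → W.getLast? = some y → Blocked E Z W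

def DSep (E : Finset (V × V)) (X Y Z : Finset V) : Prop :=
  ∀ x ∈ X, ∀ y ∈ Y, DSepNodes E x y Z

/-- `d-sep(G)` as a set of triples of pairwise disjoint node sets. -/
def DSepSet (E : Finset (V × V)) : Set (Finset V × Finset V × Finset V) :=
  { t | PairwiseDisjoint3 t.1 t.2.1 t.2.2 ∧ DSep E t.1 t.2.1 t.2.2 }

/-- `Close(G)`: add an edge between every ordered pair of distinct initial nodes. -/
def Close (E : Finset (V × V)) : Finset (V × V) :=
  E ∪ ((InitSet E ×ˢ InitSet E).filter fun p => p.1 ≠ p.2)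

/-- `G[C]`: remove all edges into nodes of `C` (so the nodes of `C` are initial). -/
def CutGraph (E : Finset (V × V)) (C : Finset V) : Finset (V × V) :=
  E.filter fun e => e.2 ∉ C

/-- `ι` is a product distribution: it factorizes into its single-node marginals,
i.e. the initial nodes are mutually independent under `ι`. -/
def IsProductDist {U : Finset V} (ι : Asg U → ℝ) : Prop :=
  ∀ b : Asg U,
    ι b = ∏ x : {x // x ∈ U}, ∑ b' : Asg U, if b' x = b x then ι b' else 0

/-! Markov chain notions -/

/-- Reachability in the underlying graph of a DTMC. -/
def MCReach {α : Type} (P : α → α → ℝ) (x y : α) : Prop :=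
  Relation.ReflTransGen (fun a b => 0 < P a b) x y

/-- Bottom strongly connected component of a DTMC: nonempty, closed under
reachability, and strongly connected. -/
def IsBSCC {α : Type} (P : α → α → ℝ) (D : Set α) : Prop :=
  D.Nonempty ∧ (∀ x ∈ D, ∀ y, MCReach P x y → y ∈ D) ∧
    ∀ x ∈ D, ∀ y ∈ D, MCReach P x y

/-- Walks of a given length along positive-probability transitions. -/
def walkLen {α : Type} (P : α → α → ℝ) : ℕ → α → α → Prop
  | 0, x, y => x = y
  | n + 1, x, y => ∃ z, 0 < P x z ∧ walkLen P n z y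

/-- The lengths of the cycles of `D`. -/
def CycleLens {α : Type} (P : α → α → ℝ) (D : Set α) : Set ℕ :=
  { n | 0 < n ∧ ∃ x ∈ D, walkLen P n x x }

/-- `D` is aperiodic: the gcd of the lengths of its cycles equals 1. -/
def AperiodicBSCC {α : Type} (P : α → α → ℝ) (D : Set α) : Prop :=
  ∀ d : ℕ, (∀ n ∈ CycleLens P D, d ∣ n) → d = 1

/-- `D` is periodic: the gcd of the lengths of its cycles is greater than 1. -/
def PeriodicBSCC {α : Type} (P : α → α → ℝ) (D : Set α) : Prop :=
  ∃ d : ℕ, 1 < d ∧ ∀ n ∈ CycleLens P D, d ∣ n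

/-- A GBN is smooth if all CPT entries and all values of `ι` lie in `(0,1)`. -/
def Smooth (B : GBN V) : Prop :=
  (∀ X b, B.cpt X b ∈ Set.Ioo (0 : ℝ) 1) ∧ ∀ d, B.ι d ∈ Set.Ioo (0 : ℝ) 1



section Stmt13Aux

variable {V : Type} [Fintype V] [DecidableEq V]

lemma mem_Pre' {E : Finset (V × V)} {p X : V} : p ∈ Pre E X ↔ (p, X) ∈ E := by
  constructor
  · intro h
    rcases Finset.mem_image.1 h with ⟨e, he, rfl⟩
    rcases Finset.mem_filter.1 he with ⟨h1, h2⟩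
    rw [← h2]; exact h1
  · intro h
    exact Finset.mem_image.2 ⟨(p, X), Finset.mem_filter.2 ⟨h, rfl⟩, rfl⟩

lemma copyProb_true_add_false (B : GBN V) (x : V) (f : V → Bool) :
    copyProb B x true f + copyProb B x false f = 1 := by
  simp [copyProb]

lemma copyProb_update (B : GBN V) {x y : V} (h : y ∉ Pre B.edges x) (v w : Bool)
    (f : V → Bool) :
    copyProb B x v (Function.update f y w) = copyProb B x v f := by
  have hfun : (fun p : {p // p ∈ Pre B.edges x} => Function.update f y w p.1)
      = fun p => f p.1 := by
    funext p
    exact Function.update_of_ne (fun hpy : p.1 = y => h (hpy ▸ p.2)) _ _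
  simp only [copyProb, hfun]

lemma res_update {U : Finset V} {y : V} (h : y ∉ U) (f : V → Bool) (w : Bool) :
    (fun x : {x // x ∈ U} => Function.update f y w x.1) = fun x => f x.1 := by
  funext x
  exact Function.update_of_ne (fun hxy => h (by rw [← hxy]; exact x.2)) _ _

lemma agrees_update {U : Finset V} {y : V} (h : y ∉ U) (f : V → Bool) (w : Bool)
    (d : Asg U) :
    Agrees (Function.update f y w) U d ↔ Agrees f U d := by
  have hc : ∀ x : {x // x ∈ U}, Function.update f y w x.1 = f x.1 :=
    fun x => Function.update_of_ne (fun hxy => h (by rw [← hxy]; exact x.2)) _ _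
  constructor <;> intro hh x
  · rw [← hc x]; exact hh x
  · rw [hc x]; exact hh x

lemma flip_sum (x : V) (G : (V → Bool) → ℝ)
    (hG : ∀ f w, G (Function.update f x w) = G f) (v : Bool) :
    (∑ f : V → Bool, if f x = v then G f else 0)
      = ∑ f : V → Bool, if f x = true then G f else 0 := by
  cases v
  · have hbij : Function.Bijective (fun f : V → Bool => Function.update f x (!(f x))) := by
      refine Function.Involutive.bijective ?_
      intro f
      simp [Function.update_idem, Function.update_self, Bool.not_not,
        Function.update_eq_self]
    refine Fintype.sum_bijective _ hbij _ _ ?_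
    intro f
    simp only [Function.update_self, hG]
    cases hfx : f x <;> simp [hfx]
  · rfl

lemma exists_sink {E : Finset (V × V)} {C : Finset V} (hC : IsCutset E C)
    (T : Finset V) (hTC : ∀ x ∈ T, x ∉ C) (hne : T.Nonempty) :
    ∃ x ∈ T, ∀ y ∈ T, (x, y) ∉ E := by
  classical
  set r : V → V → Prop := fun a b => (b, a) ∈ E ∧ a ∈ T ∧ b ∈ T with hr
  haveI : IsTrans V (Relation.TransGen r) := ⟨fun _ _ _ h1 h2 => h1.trans h2⟩
  haveI : IsIrrefl V (Relation.TransGen r) := by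
    constructor
    intro x hx
    have h1 : Relation.TransGen (Function.swap fun a b => (a, b) ∈ E ∧ a ∉ C ∧ b ∉ C) x x :=
      Relation.TransGen.mono (fun a b hab => ⟨hab.1, hTC _ hab.2.2, hTC _ hab.2.1⟩) _ _ hx
    exact hC x ((Relation.transGen_swap).1 h1)
  have hwf := Finite.wellFounded_of_trans_of_irrefl (Relation.TransGen r)
  obtain ⟨m, hmT, hmin⟩ := hwf.has_min (↑T : Set V) (Finset.coe_nonempty.2 hne)
  refine ⟨m, hmT, fun y hy hxy => ?_⟩
  exact hmin y hy (Relation.TransGen.single ⟨hxy, hy, hmT⟩)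

lemma sumOut (B : GBN V) {C : Finset V} (hC : IsCutset B.edges C) :
    ∀ T : Finset V, ∀ Out : (V → Bool) → ℝ,
      (∀ x ∈ T, x ∉ C) →
      (∀ f (y : V) (v : Bool), y ∈ T → Out (Function.update f y v) = Out f) →
      (∑ f : V → Bool, Out f * ∏ x ∈ T, copyProb B x (f x) f)
        = ∑ f : V → Bool, if ∀ x ∈ T, f x = true then Out f else 0 := by
  intro T
  induction T using Finset.strongInduction with
  | _ T ih =>
    intro Out hTC hOut
    rcases T.eq_empty_or_nonempty with rfl | hne
    · simp
    obtain ⟨x, hxT, hsink⟩ := exists_sink hC T hTC hne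
    have hxPre : ∀ z ∈ T, x ∉ Pre B.edges z := fun z hz hmem =>
      hsink z hz (mem_Pre'.1 hmem)
    set T' := T.erase x with hT'
    have hT'ss : T' ⊂ T := Finset.erase_ssubset hxT
    have hP'up : ∀ (f : V → Bool) (w : Bool),
        (∏ y ∈ T', copyProb B y (Function.update f x w y) (Function.update f x w))
          = ∏ y ∈ T', copyProb B y (f y) f := by
      intro f w
      refine Finset.prod_congr rfl fun y hy => ?_
      rw [Function.update_of_ne (Finset.ne_of_mem_erase hy),
        copyProb_update B (hxPre y (Finset.mem_of_mem_erase hy))]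
    have step2 : (∑ f : V → Bool, Out f * ∏ y ∈ T, copyProb B y (f y) f)
        = ∑ f : V → Bool,
            if f x = true then Out f * ∏ y ∈ T', copyProb B y (f y) f else 0 := by
      have hsplit : ∀ f : V → Bool, Out f * ∏ y ∈ T, copyProb B y (f y) f
          = (if f x = true then Out f * copyProb B x true f *
                ∏ y ∈ T', copyProb B y (f y) f else 0)
            + (if f x = false then Out f * copyProb B x false f *
                ∏ y ∈ T', copyProb B y (f y) f else 0) := by
        intro f
        rw [← Finset.mul_prod_erase T _ hxT]
        cases hfx : f x <;> simp [hfx] <;> ring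
      rw [Finset.sum_congr rfl fun f _ => hsplit f, Finset.sum_add_distrib]
      have hflip := flip_sum x
        (fun f => Out f * copyProb B x false f * ∏ y ∈ T', copyProb B y (f y) f)
        (by
          intro f w
          rw [hOut f x w hxT, copyProb_update B (hxPre x hxT), hP'up])
        false
      rw [hflip, ← Finset.sum_add_distrib]
      refine Finset.sum_congr rfl fun f _ => ?_
      by_cases hfx : f x = true
      · rw [if_pos hfx, if_pos hfx, if_pos hfx]
        have := copyProb_true_add_false B x f
        linear_combination (Out f * ∏ y ∈ T', copyProb B y (f y) f) * this
      · rw [if_neg hfx, if_neg hfx, if_neg hfx]; ring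
    rw [step2]
    have hmid : (∑ f : V → Bool,
          if f x = true then Out f * ∏ y ∈ T', copyProb B y (f y) f else 0)
        = ∑ f : V → Bool,
            (if f x = true then Out f else 0) * ∏ y ∈ T', copyProb B y (f y) f := by
      refine Finset.sum_congr rfl fun f _ => ?_
      by_cases hfx : f x = true <;> simp [hfx]
    rw [hmid]
    rw [ih T' hT'ss (fun g => if g x = true then Out g else 0)
      (fun y hy => hTC y (Finset.mem_of_mem_erase hy))
      (by
        intro f y v hy
        have hyx : y ≠ x := Finset.ne_of_mem_erase hy
        rw [Function.update_of_ne (Ne.symm hyx)]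
        by_cases hfx : f x = true
        · rw [if_pos hfx, if_pos hfx, hOut f y v (Finset.mem_of_mem_erase hy)]
        · rw [if_neg hfx, if_neg hfx])]
    refine Finset.sum_congr rfl fun f _ => ?_
    by_cases hall : ∀ y ∈ T, f y = true
    · rw [if_pos hall, if_pos (fun y hy => hall y (Finset.mem_of_mem_erase hy)),
        if_pos (hall x hxT)]
    · rw [if_neg hall]
      by_cases hall' : ∀ y ∈ T', f y = true
      · rw [if_pos hall']
        have hfx : ¬ f x = true := by
          intro hfx
          exact hall (fun y hy => by
            by_cases hyx : y = x
            · rw [hyx]; exact hfx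
            · exact hall' y (Finset.mem_erase.2 ⟨hyx, hy⟩))
        rw [if_neg hfx]
      · rw [if_neg hall']

lemma sum_prod_bool {α : Type} [Fintype α] [DecidableEq α] (g : α → Bool → ℝ) :
    ∑ c : α → Bool, ∏ a, g a (c a) = ∏ a, (g a true + g a false) := by
  have h := Finset.prod_univ_sum (fun _ : α => (Finset.univ : Finset Bool)) (fun a b => g a b)
  rw [Fintype.piFinset_univ] at h
  rw [← h]
  exact Finset.prod_congr rfl fun a _ => by simp [Fintype.sum_bool]

lemma sum_prod_bool_pin {α : Type} [Fintype α] [DecidableEq α] (g : α → Bool → ℝ)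
    (hg : ∀ a, g a true + g a false = 1) (a0 : α) :
    ∑ c : α → Bool, (if c a0 = true then ∏ a, g a (c a) else 0) = g a0 true := by
  classical
  set g' : α → Bool → ℝ := fun a v => if a = a0 then (if v = true then g a v else 0) else g a v
    with hg'
  have key : ∀ c : α → Bool, (if c a0 = true then ∏ a, g a (c a) else 0)
      = ∏ a, g' a (c a) := by
    intro c
    by_cases h : c a0 = true
    · rw [if_pos h]
      refine Finset.prod_congr rfl fun a _ => ?_
      by_cases ha : a = a0
      · subst ha; simp [hg', h]
      · simp only [hg', if_neg ha]
    · rw [if_neg h]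
      symm
      refine Finset.prod_eq_zero (Finset.mem_univ a0) ?_
      simp [hg', h]
  rw [Finset.sum_congr rfl fun c _ => key c, sum_prod_bool]
  have hfac : ∀ a : α, g' a true + g' a false = if a = a0 then g a0 true else 1 := by
    intro a
    by_cases ha : a = a0
    · subst ha; simp [hg']
    · simp [hg', ha, hg a]
  rw [Finset.prod_congr rfl fun a _ => hfac a, Finset.prod_ite_eq' Finset.univ a0
    (fun _ => g a0 true)]
  simp

/-- The closed form of `Extend B C γ` after summing out the copies. -/
def muForm (B : GBN V) (C : Finset V) (γ : Asg C → ℝ) (f : V → Bool) : ℝ :=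
  B.ι (fun x => f x.1) * γ (fun x => f x.1) *
    ∏ x ∈ (Finset.univ \ InitSet B.edges) \ C, copyProb B x (f x) f

lemma sum_prod_copy (B : GBN V) (C : Finset V) (f : V → Bool) :
    ∑ c : Asg C, ∏ Y ∈ C.attach, copyProb B Y.1 (c Y) f = 1 := by
  rw [Finset.attach_eq_univ]
  rw [sum_prod_bool (fun (Y : {x // x ∈ C}) v => copyProb B Y.1 v f)]
  exact Finset.prod_eq_one fun Y _ => copyProb_true_add_false B Y.1 f

lemma Extend_eq (B : GBN V) (C : Finset V) (γ : Asg C → ℝ) :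
    Extend B C γ = muForm B C γ := by
  funext a
  unfold Extend distDissect muForm
  rw [← Finset.mul_sum, sum_prod_copy, mul_one]

/-- Glue a full assignment `b` with a cutset assignment `c`. -/
def glueFun (C : Finset V) (b : V → Bool) (c : Asg C) : V → Bool :=
  fun x => if h : x ∈ C then c ⟨x, h⟩ else b x

lemma glue_agrees (C : Finset V) (b : V → Bool) (c : Asg C) :
    Agrees (glueFun C b c) C c := by
  intro x
  simp [glueFun, x.2]

lemma glue_off (C : Finset V) (b : V → Bool) (c : Asg C) :
    ∀ x, x ∉ C → glueFun C b c x = b x := by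
  intro x hx
  simp [glueFun, hx]

lemma glue_res (C : Finset V) (b : V → Bool) (c : Asg C) :
    (fun y : {x // x ∈ C} => glueFun C b c y.1) = c := by
  funext y
  simp [glueFun, y.2]

lemma glue_unique (C : Finset V) (b : V → Bool) (c : Asg C) (a : V → Bool)
    (h1 : Agrees a C c) (h2 : ∀ x, x ∉ C → a x = b x) : a = glueFun C b c := by
  funext x
  by_cases hx : x ∈ C
  · rw [glueFun]
    rw [dif_pos hx]
    exact h1 ⟨x, hx⟩
  · rw [glueFun]
    rw [dif_neg hx]
    exact h2 x hx

lemma next_marginal (B : GBN V) (C : Finset V) (γ' : Asg C → ℝ) (c : Asg C) :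
    marginal (Next B C γ') C c = ∑ b : V → Bool, distDissect B C γ' b c := by
  unfold marginal probIf Next
  dsimp only
  trans (∑ a : V → Bool, ∑ b : V → Bool,
    if Agrees a C c ∧ (∀ x, x ∉ C → b x = a x) then
      distDissect B C γ' b (fun y => a y.1) else 0)
  · refine Finset.sum_congr rfl fun a _ => ?_
    by_cases h : Agrees a C c
    · rw [if_pos h]
      refine Finset.sum_congr rfl fun b _ => ?_
      by_cases hb : ∀ x, x ∉ C → b x = a x
      · rw [if_pos hb, if_pos ⟨h, hb⟩]
      · rw [if_neg hb, if_neg (fun hc => hb hc.2)]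
    · rw [if_neg h]
      symm
      refine Finset.sum_eq_zero fun b _ => ?_
      rw [if_neg (fun hc => h hc.1)]
  rw [Finset.sum_comm]
  refine Finset.sum_congr rfl fun b _ => ?_
  rw [Finset.sum_eq_single (glueFun C b c)]
  · rw [if_pos ⟨glue_agrees C b c, fun x hx => (glue_off C b c x hx).symm⟩, glue_res]
  · intro a _ hne
    rw [if_neg]
    rintro ⟨ha1, ha2⟩
    exact hne (glue_unique C b c a ha1 (fun x hx => (ha2 x hx).symm))
  · intro h
    exact absurd (Finset.mem_univ _) h

lemma stat_unfold (B : GBN V) (C : Finset V) (γ : Asg C → ℝ)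
    (hstat : γ = vecMul γ (cutsetP B C)) (c : Asg C) :
    γ c = ∑ f : V → Bool, muForm B C γ f * ∏ Y ∈ C.attach, copyProb B Y.1 (c Y) f := by
  conv_lhs => rw [hstat]
  show ∑ d : Asg C, γ d * cutsetP B C d c = _
  have hP : ∀ d : Asg C, cutsetP B C d c = ∑ b : V → Bool, distDissect B C (DiracD d) b c :=
    fun d => next_marginal B C (DiracD d) c
  rw [Finset.sum_congr rfl fun d _ => by rw [hP d, Finset.mul_sum], Finset.sum_comm]
  refine Finset.sum_congr rfl fun b _ => ?_
  unfold distDissect DiracD muForm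
  rw [Finset.sum_eq_single (fun x : {x // x ∈ C} => b x.1)]
  · rw [if_pos rfl]
    ring
  · intro d _ hne
    rw [if_neg (fun h => hne h.symm)]
    ring
  · intro h
    exact absurd (Finset.mem_univ _) h

lemma total_mass (B : GBN V) (C : Finset V) (γ : Asg C → ℝ)
    (hγd : IsDist γ) (hstat : γ = vecMul γ (cutsetP B C)) :
    ∑ f : V → Bool, muForm B C γ f = 1 := by
  have h2 : ∑ c : Asg C, γ c
      = ∑ f : V → Bool, muForm B C γ f := by
    rw [Finset.sum_congr rfl fun c _ => stat_unfold B C γ hstat c, Finset.sum_comm]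
    refine Finset.sum_congr rfl fun f _ => ?_
    rw [← Finset.mul_sum, sum_prod_copy, mul_one]
  rw [← h2]
  exact hγd.2

lemma sum_partition (U : Finset V) (h : (V → Bool) → ℝ) :
    ∑ f : V → Bool, h f
      = ∑ d : Asg U, ∑ f : V → Bool, if Agrees f U d then h f else 0 := by
  rw [Finset.sum_comm]
  refine Finset.sum_congr rfl fun f _ => ?_
  rw [Finset.sum_eq_single (fun x : {x // x ∈ U} => f x.1)]
  · rw [if_pos (fun x => rfl)]
  · intro d _ hne
    rw [if_neg]
    intro hag
    exact hne (by funext x; exact (hag x).symm)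
  · intro h
    exact absurd (Finset.mem_univ _) h

/-- All factors of `muForm` except the one of `X`. -/
def restFun (B : GBN V) (C : Finset V) (γ : Asg C → ℝ) (X : V) (f : V → Bool) : ℝ :=
  B.ι (fun x => f x.1) * γ (fun x => f x.1) *
    ∏ y ∈ ((Finset.univ \ InitSet B.edges) \ C).erase X, copyProb B y (f y) f

lemma muForm_split (B : GBN V) (C : Finset V) (γ : Asg C → ℝ) {X : V}
    (hX : X ∈ (Finset.univ \ InitSet B.edges) \ C) (f : V → Bool) :
    muForm B C γ f = copyProb B X (f X) f * restFun B C γ X f := by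
  unfold muForm restFun
  rw [← Finset.mul_prod_erase _ _ hX]
  ring

lemma strongPart (B : GBN V) (C : Finset V) (hC : IsCutset B.edges C) (γ : Asg C → ℝ)
    (X : V) (hXI : X ∉ InitSet B.edges) (hXC : X ∉ C) :
    StrongCPT B (muForm B C γ) X := by
  classical
  intro c
  have hXS : X ∈ (Finset.univ \ InitSet B.edges) \ C := by
    rw [Finset.mem_sdiff, Finset.mem_sdiff]
    exact ⟨⟨Finset.mem_univ X, hXI⟩, hXC⟩
  have hXX : X ∉ Pre B.edges X := fun h =>
    hC X (Relation.TransGen.single ⟨mem_Pre'.1 h, hXC, hXC⟩)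
  -- the set of descendants of `X` avoiding `C`
  set e' : V → V → Prop := fun a b => (a, b) ∈ B.edges ∧ b ∉ C with he'
  set D : Finset V := Finset.univ.filter (fun y => Relation.TransGen e' X y) with hDdef
  have hmemD : ∀ y, y ∈ D ↔ Relation.TransGen e' X y := by
    intro y; simp [hDdef]
  have hDC : ∀ y ∈ D, y ∉ C := by
    intro y hy
    have h := (hmemD y).1 hy
    cases h with
    | single h => exact h.2
    | tail h1 h2 => exact h2.2
  have hXD : X ∉ D := by
    intro hXmem
    have key : ∀ y, Relation.TransGen e' X y →
        Relation.TransGen (fun a b => (a, b) ∈ B.edges ∧ a ∉ C ∧ b ∉ C) X y ∧ y ∉ C := by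
      intro y hy
      induction hy with
      | single h => exact ⟨Relation.TransGen.single ⟨h.1, hXC, h.2⟩, h.2⟩
      | tail h1 h2 ih => exact ⟨ih.1.tail ⟨h2.1, ih.2, h2.2⟩, h2.2⟩
    exact hC X (key X ((hmemD X).1 hXmem)).1
  have hDI : ∀ y ∈ D, y ∉ InitSet B.edges := by
    intro y hy hyI
    have hedge : ∃ p, (p, y) ∈ B.edges := by
      have h := (hmemD y).1 hy
      cases h with
      | single h => exact ⟨X, h.1⟩
      | tail h1 h2 => exact ⟨_, h2.1⟩
    obtain ⟨p, hp⟩ := hedge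
    have hmem : p ∈ Pre B.edges y := mem_Pre'.2 hp
    rw [(Finset.mem_filter.1 hyI).2] at hmem
    exact Finset.notMem_empty p hmem
  have hPreD : ∀ p ∈ Pre B.edges X, p ∉ D := by
    intro p hp hpD
    exact hXD ((hmemD X).2 (((hmemD p).1 hpD).tail ⟨mem_Pre'.1 hp, hXC⟩))
  have hDclose : ∀ y ∈ D, ∀ z, (y, z) ∈ B.edges → z ∉ C → z ∈ D := by
    intro y hy z hz hzC
    exact (hmemD z).2 (((hmemD y).1 hy).tail ⟨hz, hzC⟩)
  have hchild : ∀ z, (X, z) ∈ B.edges → z ∉ C → z ∈ D := by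
    intro z hz hzC
    exact (hmemD z).2 (Relation.TransGen.single ⟨hz, hzC⟩)
  have hDS : D ⊆ ((Finset.univ \ InitSet B.edges) \ C).erase X := by
    intro y hy
    refine Finset.mem_erase.2 ⟨fun h => hXD (h ▸ hy), ?_⟩
    rw [Finset.mem_sdiff, Finset.mem_sdiff]
    exact ⟨⟨Finset.mem_univ y, hDI y hy⟩, hDC y hy⟩
  -- the constant cpt values under agreement with `c`
  have hcptEq : ∀ f : V → Bool, Agrees f (Pre B.edges X) c →
      B.cpt X (fun p => f p.1) = B.cpt X c := by
    intro f hf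
    congr 1
    funext p
    exact hf p
  have hcpT : ∀ f : V → Bool, Agrees f (Pre B.edges X) c →
      copyProb B X true f = B.cpt X c := by
    intro f hf
    rw [copyProb, if_pos rfl, hcptEq f hf]
  have hcpF : ∀ f : V → Bool, Agrees f (Pre B.edges X) c →
      copyProb B X false f = 1 - B.cpt X c := by
    intro f hf
    rw [copyProb, if_neg (by simp), hcptEq f hf]
  -- the two halves
  have h1 : probIf (muForm B C γ) (fun f => f X = true ∧ Agrees f (Pre B.edges X) c)
      = B.cpt X c *
          ∑ f : V → Bool, if f X = true ∧ Agrees f (Pre B.edges X) c then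
            restFun B C γ X f else 0 := by
    unfold probIf
    dsimp only
    rw [Finset.mul_sum]
    refine Finset.sum_congr rfl fun f _ => ?_
    by_cases h : f X = true ∧ Agrees f (Pre B.edges X) c
    · rw [if_pos h, if_pos h, muForm_split B C γ hXS f, h.1, hcpT f h.2]
    · rw [if_neg h, if_neg h, mul_zero]
  have h1' : (∑ f : V → Bool, if f X = false ∧ Agrees f (Pre B.edges X) c then
        muForm B C γ f else 0)
      = (1 - B.cpt X c) *
          ∑ f : V → Bool, if f X = false ∧ Agrees f (Pre B.edges X) c then
            restFun B C γ X f else 0 := by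
    rw [Finset.mul_sum]
    refine Finset.sum_congr rfl fun f _ => ?_
    by_cases h : f X = false ∧ Agrees f (Pre B.edges X) c
    · rw [if_pos h, if_pos h, muForm_split B C γ hXS f, h.1, hcpF f h.2]
    · rw [if_neg h, if_neg h, mul_zero]
  have h2 : probIf (muForm B C γ) (fun f => Agrees f (Pre B.edges X) c)
      = B.cpt X c *
          (∑ f : V → Bool, if f X = true ∧ Agrees f (Pre B.edges X) c then
            restFun B C γ X f else 0)
        + (1 - B.cpt X c) *
          (∑ f : V → Bool, if f X = false ∧ Agrees f (Pre B.edges X) c then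
            restFun B C γ X f else 0) := by
    unfold probIf
    dsimp only
    trans (∑ f : V → Bool,
        ((if f X = true ∧ Agrees f (Pre B.edges X) c then muForm B C γ f else 0)
          + (if f X = false ∧ Agrees f (Pre B.edges X) c then muForm B C γ f else 0)))
    · refine Finset.sum_congr rfl fun f _ => ?_
      by_cases hAg : Agrees f (Pre B.edges X) c
      · rw [if_pos hAg]
        cases hfx : f X
        · rw [if_neg (fun h => absurd h.1 (by decide)), if_pos ⟨rfl, hAg⟩, zero_add]
        · rw [if_pos ⟨rfl, hAg⟩, if_neg (fun h => absurd h.1 (by decide)), add_zero]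
      · rw [if_neg hAg, if_neg (fun h => hAg h.2), if_neg (fun h => hAg h.2), add_zero]
    rw [Finset.sum_add_distrib]
    have h1t : (∑ f : V → Bool, if f X = true ∧ Agrees f (Pre B.edges X) c then
          muForm B C γ f else 0)
        = B.cpt X c *
            ∑ f : V → Bool, if f X = true ∧ Agrees f (Pre B.edges X) c then
              restFun B C γ X f else 0 := by
      rw [Finset.mul_sum]
      refine Finset.sum_congr rfl fun f _ => ?_
      by_cases h : f X = true ∧ Agrees f (Pre B.edges X) c
      · rw [if_pos h, if_pos h, muForm_split B C γ hXS f, h.1, hcpT f h.2]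
      · rw [if_neg h, if_neg h, mul_zero]
    rw [h1t, h1']
  -- the central symmetry: sum out the descendants
  have hsum : ∀ v : Bool,
      (∑ f : V → Bool, if f X = v ∧ Agrees f (Pre B.edges X) c then
          restFun B C γ X f else 0)
        = ∑ f : V → Bool, if f X = v then
            (if (∀ y ∈ D, f y = true) ∧ Agrees f (Pre B.edges X) c then
              B.ι (fun x => f x.1) * γ (fun x => f x.1) *
                ∏ y ∈ (((Finset.univ \ InitSet B.edges) \ C).erase X) \ D,
                  copyProb B y (f y) f
            else 0) else 0 := by
    intro v
    have hInv : ∀ (f : V → Bool) (y : V) (w : Bool), y ∈ D →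
        (fun f : V → Bool => if f X = v ∧ Agrees f (Pre B.edges X) c then
            B.ι (fun x => f x.1) * γ (fun x => f x.1) *
              ∏ z ∈ (((Finset.univ \ InitSet B.edges) \ C).erase X) \ D,
                copyProb B z (f z) f
          else 0) (Function.update f y w)
          = (fun f : V → Bool => if f X = v ∧ Agrees f (Pre B.edges X) c then
            B.ι (fun x => f x.1) * γ (fun x => f x.1) *
              ∏ z ∈ (((Finset.univ \ InitSet B.edges) \ C).erase X) \ D,
                copyProb B z (f z) f
          else 0) f := by
      intro f y w hy
      dsimp only
      have hupd1 : Function.update f y w X = f X :=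
        Function.update_of_ne (fun h => hXD (by rw [h]; exact hy)) _ _
      have hupd2 : Agrees (Function.update f y w) (Pre B.edges X) c
          ↔ Agrees f (Pre B.edges X) c :=
        agrees_update (fun hyP => hPreD y hyP hy) f w c
      have hupd5 : (∏ z ∈ (((Finset.univ \ InitSet B.edges) \ C).erase X) \ D,
            copyProb B z (Function.update f y w z) (Function.update f y w))
          = ∏ z ∈ (((Finset.univ \ InitSet B.edges) \ C).erase X) \ D,
              copyProb B z (f z) f := by
        refine Finset.prod_congr rfl fun z hz => ?_
        have hzD : z ∉ D := (Finset.mem_sdiff.1 hz).2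
        have hzS : z ∈ ((Finset.univ \ InitSet B.edges) \ C).erase X :=
          (Finset.mem_sdiff.1 hz).1
        have hzC : z ∉ C :=
          (Finset.mem_sdiff.1 (Finset.mem_of_mem_erase hzS)).2
        have hzy : z ≠ y := fun h => hzD (h ▸ hy)
        have hyPz : y ∉ Pre B.edges z := fun hyP =>
          hzD (hDclose y hy z (mem_Pre'.1 hyP) hzC)
        rw [Function.update_of_ne hzy, copyProb_update B hyPz]
      by_cases h : f X = v ∧ Agrees f (Pre B.edges X) c
      · rw [if_pos (by rw [hupd1]; exact ⟨h.1, hupd2.2 h.2⟩), if_pos h,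
          res_update (hDI y hy) f w, res_update (hDC y hy) f w, hupd5]
      · rw [if_neg (fun hc' => h ⟨hupd1 ▸ hc'.1, hupd2.1 hc'.2⟩), if_neg h]
    trans (∑ f : V → Bool,
        (if f X = v ∧ Agrees f (Pre B.edges X) c then
          B.ι (fun x => f x.1) * γ (fun x => f x.1) *
            ∏ z ∈ (((Finset.univ \ InitSet B.edges) \ C).erase X) \ D,
              copyProb B z (f z) f
        else 0) * ∏ x ∈ D, copyProb B x (f x) f)
    · refine Finset.sum_congr rfl fun f _ => ?_
      by_cases h : f X = v ∧ Agrees f (Pre B.edges X) c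
      · rw [if_pos h, if_pos h]
        unfold restFun
        rw [← Finset.prod_sdiff hDS]
        ring
      · rw [if_neg h, if_neg h, zero_mul]
    trans (∑ f : V → Bool, if ∀ x ∈ D, f x = true then
        (if f X = v ∧ Agrees f (Pre B.edges X) c then
          B.ι (fun x => f x.1) * γ (fun x => f x.1) *
            ∏ z ∈ (((Finset.univ \ InitSet B.edges) \ C).erase X) \ D,
              copyProb B z (f z) f
        else 0) else 0)
    · exact sumOut B hC D _ hDC hInv
    · refine Finset.sum_congr rfl fun f _ => ?_
      by_cases hx : f X = v
      · by_cases hAg : Agrees f (Pre B.edges X) c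
        · by_cases hD1 : ∀ y ∈ D, f y = true
          · rw [if_pos hD1, if_pos ⟨hx, hAg⟩, if_pos hx, if_pos ⟨hD1, hAg⟩]
          · rw [if_neg hD1, if_pos hx, if_neg (fun h => hD1 h.1)]
        · by_cases hD1 : ∀ y ∈ D, f y = true
          · rw [if_pos hD1, if_neg (fun h => hAg h.2), if_pos hx,
              if_neg (fun h => hAg h.2)]
          · rw [if_neg hD1, if_pos hx, if_neg (fun h => hAg h.2)]
      · rw [if_neg hx]
        by_cases hD1 : ∀ y ∈ D, f y = true
        · rw [if_pos hD1, if_neg (fun h => hx h.1)]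
        · rw [if_neg hD1]
  have h3 : (∑ f : V → Bool, if f X = true ∧ Agrees f (Pre B.edges X) c then
        restFun B C γ X f else 0)
      = ∑ f : V → Bool, if f X = false ∧ Agrees f (Pre B.edges X) c then
          restFun B C γ X f else 0 := by
    rw [hsum true, hsum false]
    symm
    refine flip_sum X _ ?_ false
    intro f w
    have hupd1 : ∀ y ∈ D, Function.update f X w y = f y := fun y hy =>
      Function.update_of_ne (fun h => hXD (by rw [← h]; exact hy)) _ _
    have hupd2 : Agrees (Function.update f X w) (Pre B.edges X) c
        ↔ Agrees f (Pre B.edges X) c := agrees_update hXX f w c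
    have hupd5 : (∏ z ∈ (((Finset.univ \ InitSet B.edges) \ C).erase X) \ D,
          copyProb B z (Function.update f X w z) (Function.update f X w))
        = ∏ z ∈ (((Finset.univ \ InitSet B.edges) \ C).erase X) \ D,
            copyProb B z (f z) f := by
      refine Finset.prod_congr rfl fun z hz => ?_
      have hzD : z ∉ D := (Finset.mem_sdiff.1 hz).2
      have hzE : z ∈ ((Finset.univ \ InitSet B.edges) \ C).erase X :=
        (Finset.mem_sdiff.1 hz).1
      have hzC : z ∉ C :=
        (Finset.mem_sdiff.1 (Finset.mem_of_mem_erase hzE)).2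
      have hzX : z ≠ X := Finset.ne_of_mem_erase hzE
      have hXPz : X ∉ Pre B.edges z := fun hXP =>
        hzD (hchild z (mem_Pre'.1 hXP) hzC)
      rw [Function.update_of_ne hzX, copyProb_update B hXPz]
    by_cases h : (∀ y ∈ D, f y = true) ∧ Agrees f (Pre B.edges X) c
    · rw [if_pos (by exact ⟨fun y hy => (hupd1 y hy).trans (h.1 y hy), hupd2.2 h.2⟩),
        if_pos h, res_update hXI f w, res_update hXC f w, hupd5]
    · rw [if_neg (fun hc' => h ⟨fun y hy => (hupd1 y hy).symm.trans (hc'.1 y hy),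
        hupd2.1 hc'.2⟩), if_neg h]
  rw [h1, h2, ← h3]
  ring

/-- The `ι`-mass of the class of a cutset assignment `d`. -/
def MFun (B : GBN V) (C : Finset V) (d : Asg C) : ℝ :=
  ∑ f : V → Bool,
    if (∀ x ∈ (Finset.univ \ InitSet B.edges) \ C, f x = true) ∧ Agrees f C d
    then B.ι (fun x => f x.1) else 0

set_option maxHeartbeats 2000000 in
lemma weakPart (B : GBN V) (C : Finset V) (hC : IsCutset B.edges C) (γ : Asg C → ℝ)
    (hγd : IsDist γ) (hstat : γ = vecMul γ (cutsetP B C))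
    (X : V) (hXI : X ∉ InitSet B.edges) (hXC : X ∈ C) :
    WeakCPT B (muForm B C γ) X := by
  classical
  have hSC : ∀ x ∈ (Finset.univ \ InitSet B.edges) \ C, x ∉ C :=
    fun x hx => (Finset.mem_sdiff.1 hx).2
  have hSI : ∀ x ∈ (Finset.univ \ InitSet B.edges) \ C, x ∉ InitSet B.edges :=
    fun x hx => (Finset.mem_sdiff.1 (Finset.mem_sdiff.1 hx).1).2
  have hCM : ∀ d : Asg C,
      (∑ f : V → Bool, if Agrees f C d then muForm B C γ f else 0)
        = γ d * MFun B C d := by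
    intro d
    have hInvd : ∀ (f : V → Bool) (y : V) (w : Bool),
        y ∈ (Finset.univ \ InitSet B.edges) \ C →
        (fun f : V → Bool => if Agrees f C d then B.ι (fun x => f x.1) else 0)
            (Function.update f y w)
          = (fun f : V → Bool => if Agrees f C d then B.ι (fun x => f x.1) else 0) f := by
      intro f y w hy
      dsimp only
      by_cases h : Agrees f C d
      · rw [if_pos ((agrees_update (hSC y hy) f w d).2 h), if_pos h,
          res_update (hSI y hy) f w]
      · rw [if_neg (fun h' => h ((agrees_update (hSC y hy) f w d).1 h')), if_neg h]
    trans (γ d * ∑ f : V → Bool,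
        (if Agrees f C d then B.ι (fun x => f x.1) else 0) *
          ∏ x ∈ (Finset.univ \ InitSet B.edges) \ C, copyProb B x (f x) f)
    · rw [Finset.mul_sum]
      refine Finset.sum_congr rfl fun f _ => ?_
      by_cases h : Agrees f C d
      · rw [if_pos h, if_pos h]
        have hres : (fun x : {x // x ∈ C} => f x.1) = d := funext fun x => h x
        unfold muForm
        rw [hres]
        ring
      · rw [if_neg h, if_neg h, zero_mul, mul_zero]
    congr 1
    trans (∑ f : V → Bool, if ∀ x ∈ (Finset.univ \ InitSet B.edges) \ C, f x = true then
        (if Agrees f C d then B.ι (fun x => f x.1) else 0) else 0)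
    · exact sumOut B hC ((Finset.univ \ InitSet B.edges) \ C) _ hSC hInvd
    · unfold MFun
      refine Finset.sum_congr rfl fun f _ => ?_
      by_cases hA : ∀ x ∈ (Finset.univ \ InitSet B.edges) \ C, f x = true
      · by_cases hB : Agrees f C d
        · rw [if_pos hA, if_pos hB, if_pos ⟨hA, hB⟩]
        · rw [if_pos hA, if_neg hB, if_neg (fun h => hB h.2)]
      · rw [if_neg hA, if_neg (fun h => hA h.1)]
  have hMle : ∀ d : Asg C, MFun B C d ≤ 1 := by
    intro d
    unfold MFun
    rw [← Finset.sum_filter]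
    have hinj : ∀ f ∈ Finset.univ.filter (fun f : V → Bool =>
          (∀ x ∈ (Finset.univ \ InitSet B.edges) \ C, f x = true) ∧ Agrees f C d),
        ∀ g ∈ Finset.univ.filter (fun f : V → Bool =>
          (∀ x ∈ (Finset.univ \ InitSet B.edges) \ C, f x = true) ∧ Agrees f C d),
        (fun x : {x // x ∈ InitSet B.edges} => f x.1)
          = (fun x : {x // x ∈ InitSet B.edges} => g x.1) → f = g := by
      intro f hf g hg hres
      obtain ⟨hfS, hfA⟩ := (Finset.mem_filter.1 hf).2
      obtain ⟨hgS, hgA⟩ := (Finset.mem_filter.1 hg).2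
      funext x
      by_cases hxI : x ∈ InitSet B.edges
      · exact congrFun hres ⟨x, hxI⟩
      · by_cases hxC : x ∈ C
        · exact (hfA ⟨x, hxC⟩).trans (hgA ⟨x, hxC⟩).symm
        · have hxS : x ∈ (Finset.univ \ InitSet B.edges) \ C := by
            rw [Finset.mem_sdiff, Finset.mem_sdiff]
            exact ⟨⟨Finset.mem_univ x, hxI⟩, hxC⟩
          rw [hfS x hxS, hgS x hxS]
    rw [← Finset.sum_image hinj]
    calc (∑ b ∈ Finset.image _ _, B.ι b)
        ≤ ∑ b : Asg (InitSet B.edges), B.ι b :=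
          Finset.sum_le_sum_of_subset_of_nonneg (Finset.subset_univ _)
            (fun b _ _ => B.ι_dist.1 b)
      _ = 1 := B.ι_dist.2
  have htot : ∑ d : Asg C, γ d * MFun B C d = 1 := by
    have hp := sum_partition C (muForm B C γ)
    rw [total_mass B C γ hγd hstat] at hp
    calc ∑ d : Asg C, γ d * MFun B C d
        = ∑ d : Asg C, ∑ f : V → Bool, if Agrees f C d then muForm B C γ f else 0 :=
          Finset.sum_congr rfl fun d _ => (hCM d).symm
      _ = 1 := hp.symm
  have hfix : ∀ d : Asg C, γ d * MFun B C d = γ d := by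
    intro d
    have hnn : ∀ e ∈ (Finset.univ : Finset (Asg C)), 0 ≤ γ e - γ e * MFun B C e := by
      intro e _
      have h1 : γ e * MFun B C e ≤ γ e * 1 :=
        mul_le_mul_of_nonneg_left (hMle e) (hγd.1 e)
      linarith
    have h0 : ∑ e : Asg C, (γ e - γ e * MFun B C e) = 0 := by
      rw [Finset.sum_sub_distrib, hγd.2, htot]
      ring
    have hz := (Finset.sum_eq_zero_iff_of_nonneg hnn).1 h0 d (Finset.mem_univ d)
    linarith
  have hLHS : probIf (muForm B C γ) (fun f => f X = true)
      = ∑ d : Asg C, if d ⟨X, hXC⟩ = true then γ d else 0 := by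
    unfold probIf
    dsimp only
    trans (∑ f : V → Bool, if f X = true then muForm B C γ f else 0)
    · refine Finset.sum_congr rfl fun f _ => ?_
      by_cases h : f X = true
      · rw [if_pos h, if_pos h]
      · rw [if_neg h, if_neg h]
    trans (∑ d : Asg C, ∑ f : V → Bool,
        if Agrees f C d then (if f X = true then muForm B C γ f else 0) else 0)
    · exact sum_partition C _
    refine Finset.sum_congr rfl fun d _ => ?_
    by_cases hd : d ⟨X, hXC⟩ = true
    · rw [if_pos hd]
      trans (∑ f : V → Bool, if Agrees f C d then muForm B C γ f else 0)
      · refine Finset.sum_congr rfl fun f _ => ?_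
        by_cases hA : Agrees f C d
        · rw [if_pos hA, if_pos hA, if_pos ((hA ⟨X, hXC⟩).trans hd)]
        · rw [if_neg hA, if_neg hA]
      · rw [hCM d]
        exact hfix d
    · rw [if_neg hd]
      refine Finset.sum_eq_zero fun f _ => ?_
      by_cases hA : Agrees f C d
      · rw [if_pos hA, if_neg (fun h => hd ((hA ⟨X, hXC⟩).symm.trans h))]
      · rw [if_neg hA]
  have hstatX : (∑ d : Asg C, if d ⟨X, hXC⟩ = true then γ d else 0)
      = ∑ f : V → Bool, muForm B C γ f * copyProb B X true f := by
    trans (∑ d : Asg C, ∑ f : V → Bool, if d ⟨X, hXC⟩ = true then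
        muForm B C γ f * ∏ Y ∈ C.attach, copyProb B Y.1 (d Y) f else 0)
    · refine Finset.sum_congr rfl fun d _ => ?_
      by_cases hd : d ⟨X, hXC⟩ = true
      · rw [if_pos hd, stat_unfold B C γ hstat d]
        refine Finset.sum_congr rfl fun f _ => ?_
        rw [if_pos hd]
      · rw [if_neg hd]
        symm
        refine Finset.sum_eq_zero fun f _ => ?_
        rw [if_neg hd]
    rw [Finset.sum_comm]
    refine Finset.sum_congr rfl fun f _ => ?_
    trans (muForm B C γ f * ∑ d : Asg C, if d ⟨X, hXC⟩ = true then
        ∏ Y ∈ C.attach, copyProb B Y.1 (d Y) f else 0)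
    · rw [Finset.mul_sum]
      refine Finset.sum_congr rfl fun d _ => ?_
      by_cases hd : d ⟨X, hXC⟩ = true
      · rw [if_pos hd, if_pos hd]
      · rw [if_neg hd, if_neg hd, mul_zero]
    · congr 1
      have hone : ∀ Y : {x // x ∈ C}, copyProb B Y.1 true f + copyProb B Y.1 false f = 1 :=
        fun Y => copyProb_true_add_false B Y.1 f
      have hpin := sum_prod_bool_pin (fun (Y : {x // x ∈ C}) v => copyProb B Y.1 v f)
        hone ⟨X, hXC⟩
      rw [show C.attach = (Finset.univ : Finset {x // x ∈ C}) from Finset.attach_eq_univ]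
      exact hpin
  have hRHS : (∑ c : Asg (Pre B.edges X), probIf (muForm B C γ)
        (fun f => Agrees f (Pre B.edges X) c) * B.cpt X c)
      = ∑ f : V → Bool, muForm B C γ f * copyProb B X true f := by
    unfold probIf
    dsimp only
    trans (∑ c : Asg (Pre B.edges X), ∑ f : V → Bool,
        if Agrees f (Pre B.edges X) c then muForm B C γ f * B.cpt X c else 0)
    · refine Finset.sum_congr rfl fun c _ => ?_
      rw [Finset.sum_mul]
      refine Finset.sum_congr rfl fun f _ => ?_
      by_cases hA : Agrees f (Pre B.edges X) c
      · rw [if_pos hA, if_pos hA]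
      · rw [if_neg hA, if_neg hA, zero_mul]
    rw [Finset.sum_comm]
    refine Finset.sum_congr rfl fun f _ => ?_
    rw [Finset.sum_eq_single (fun p : {p // p ∈ Pre B.edges X} => f p.1)]
    · rw [if_pos (fun p => rfl)]
      have hcp : copyProb B X true f = B.cpt X (fun p : {p // p ∈ Pre B.edges X} => f p.1) := by
        rw [copyProb, if_pos rfl]
      rw [hcp]
    · intro c _ hne
      rw [if_neg (fun hA => hne (by funext p; exact (hA p).symm))]
    · intro h
      exact absurd (Finset.mem_univ _) h
  show probIf (muForm B C γ) (fun f => f X = true)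
      = ∑ c : Asg (Pre B.edges X), probIf (muForm B C γ)
          (fun f => Agrees f (Pre B.edges X) c) * B.cpt X c
  rw [hLHS, hstatX]
  exact hRHS.symm

end Stmt13Aux

/-- For a GBN `B` with cutset `C` and `μ ∈ [B]_{MC-C}`, `μ` is
strongly CPT-consistent for every (non-initial) node in `V∖C` and weakly
CPT-consistent for every (non-initial) node in `C`. -/
theorem stmt13 {V : Type} [Fintype V] [DecidableEq V]
    (B : GBN V) (C : Finset V) (hC : IsCutset B.edges C)
    (μ : (V → Bool) → ℝ) (hμ : μ ∈ MCStatSem B C) :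
    (∀ X, X ∉ InitSet B.edges → X ∉ C → StrongCPT B μ X) ∧
    (∀ X, X ∉ InitSet B.edges → X ∈ C → WeakCPT B μ X) := by
  obtain ⟨γ, hγd, hstat, rfl⟩ := hμ
  rw [Extend_eq B C γ]
  exact ⟨fun X hXI hXC => strongPart B C hC γ X hXI hXC,
    fun X hXI hXC => weakPart B C hC γ hγd hstat X hXI hXC⟩

end GBNPaper
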